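/- For every τ = (μ)(ν) ∈ X_C^{*2} and every σ = (μ̃')(ν̃') ∈ X_C^1 with τ ≤ σ, one has Φ_C(τ) ≤ σ. Consequently, Φ_C(τ) is the smallest element of X_C^1 that is ≥ τ, i.e. Φ_C(τ) = min{σ ∈ X_C^1 : σ ≥ τ}. -/

import Mathlib

open Finset

/-- A partition: weakly decreasing, finitely supported sequence of naturals (0-indexed). -/
def IsPartition (μ : ℕ → ℕ) : Prop :=
  Antitone μ ∧ ∃ N, ∀ i, N ≤ i → μ i = 0

/-- Membership in `P_2(n)`: a pair of partitions of total size `n`. -/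
def PairP2 (n : ℕ) (p : (ℕ → ℕ) × (ℕ → ℕ)) : Prop :=
  IsPartition p.1 ∧ IsPartition p.2 ∧
    ∃ N, (∀ i, N ≤ i → p.1 i = 0 ∧ p.2 i = 0) ∧
      (∑ i ∈ range N, (p.1 i + p.2 i)) = n

/-- The dominance-type order on pairs of partitions (0-indexed: `p.1 0` is `μ_1`). -/
def PairLE (p q : (ℕ → ℕ) × (ℕ → ℕ)) : Prop :=
  (∀ j, ∑ i ∈ range j, (p.1 i + p.2 i) ≤ ∑ i ∈ range j, (q.1 i + q.2 i)) ∧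
  (∀ j, (∑ i ∈ range j, (p.1 i + p.2 i)) + p.1 j ≤
        (∑ i ∈ range j, (q.1 i + q.2 i)) + q.1 j)

/-- The map `Φ_C` on pairs of partitions (0-indexed). -/
def PhiC (p : (ℕ → ℕ) × (ℕ → ℕ)) : (ℕ → ℕ) × (ℕ → ℕ) :=
  (fun i => match i with
    | 0 => p.1 0
    | j + 1 =>
        if p.2 j + 1 < p.1 (j + 1) then (p.1 (j + 1) + p.2 j + 1) / 2
        else p.1 (j + 1),
   fun i =>
    if p.2 i + 1 < p.1 (i + 1) then (p.1 (i + 1) + p.2 i) / 2 else p.2 i)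

lemma phiC_fst_zero (p : (ℕ → ℕ) × (ℕ → ℕ)) : (PhiC p).1 0 = p.1 0 := rfl

lemma phiC_fst_succ (p : (ℕ → ℕ) × (ℕ → ℕ)) (j : ℕ) :
    (PhiC p).1 (j + 1) =
      if p.2 j + 1 < p.1 (j + 1) then (p.1 (j + 1) + p.2 j + 1) / 2
      else p.1 (j + 1) := rfl

lemma phiC_snd (p : (ℕ → ℕ) × (ℕ → ℕ)) (j : ℕ) :
    (PhiC p).2 j =
      if p.2 j + 1 < p.1 (j + 1) then (p.1 (j + 1) + p.2 j) / 2 else p.2 j := rfl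

lemma phiC_pairsum (p : (ℕ → ℕ) × (ℕ → ℕ)) (j : ℕ) :
    (PhiC p).2 j + (PhiC p).1 (j + 1) = p.2 j + p.1 (j + 1) := by
  rw [phiC_snd, phiC_fst_succ]
  split_ifs with h <;> omega

lemma phiC_nu_le (p : (ℕ → ℕ) × (ℕ → ℕ)) (j : ℕ) :
    p.2 j ≤ (PhiC p).2 j := by
  rw [phiC_snd]
  split_ifs with h <;> omega

lemma phiC_key (p : (ℕ → ℕ) × (ℕ → ℕ)) (j : ℕ) :
    (∑ i ∈ range j, ((PhiC p).1 i + (PhiC p).2 i)) + (PhiC p).1 j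
    = (∑ i ∈ range j, (p.1 i + p.2 i)) + p.1 j := by
  induction j with
  | zero => simp [phiC_fst_zero]
  | succ k ih =>
    rw [sum_range_succ, sum_range_succ]
    have h := phiC_pairsum p k
    omega

lemma phiC_prefix (p : (ℕ → ℕ) × (ℕ → ℕ)) (k : ℕ) :
    ∑ i ∈ range (k + 1), ((PhiC p).1 i + (PhiC p).2 i)
    = (∑ i ∈ range k, (p.1 i + p.2 i)) + p.1 k + (PhiC p).2 k := by
  have h := phiC_key p k
  rw [sum_range_succ]
  omega

/-- `Φ_C(τ)` is the smallest element of `X_C^1` that is `≥ τ`. -/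
theorem phiC_min (p : (ℕ → ℕ) × (ℕ → ℕ))
    (h1 : IsPartition p.1) (h2 : IsPartition p.2)
    (hC : ∀ i, p.2 i ≤ p.1 i + 1) :
    (∀ i, (PhiC p).1 (i + 1) ≤ (PhiC p).2 i + 1 ∧ (PhiC p).2 i ≤ (PhiC p).1 i + 1) ∧
    PairLE p (PhiC p) ∧
    (∀ q : (ℕ → ℕ) × (ℕ → ℕ), IsPartition q.1 → IsPartition q.2 →
      (∀ i, q.1 (i + 1) ≤ q.2 i + 1 ∧ q.2 i ≤ q.1 i + 1) →
      PairLE p q → PairLE (PhiC p) q) := by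
  obtain ⟨hm1, -⟩ := h1
  obtain ⟨hm2, -⟩ := h2
  refine ⟨?_, ⟨?_, ?_⟩, ?_⟩
  · -- Φ_C(τ) ∈ X_C^1
    intro i
    have ha : p.1 (i + 1) ≤ p.1 i := hm1 (Nat.le_succ i)
    have hc1 := hC i
    constructor
    · rw [phiC_fst_succ, phiC_snd]
      split_ifs with h <;> omega
    · cases i with
      | zero =>
        rw [phiC_snd, phiC_fst_zero]
        split_ifs with h <;> omega
      | succ k =>
        have ha2 : p.1 (k + 2) ≤ p.1 (k + 1) := hm1 (Nat.le_succ _)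
        have hb : p.2 (k + 1) ≤ p.2 k := hm2 (Nat.le_succ k)
        rw [phiC_snd, phiC_fst_succ]
        split_ifs with h h' <;> omega
  · -- first family of τ ≤ Φ_C(τ)
    intro j
    cases j with
    | zero => simp
    | succ k =>
      rw [phiC_prefix, sum_range_succ]
      have := phiC_nu_le p k
      omega
  · -- second family of τ ≤ Φ_C(τ)
    intro j
    rw [phiC_key]
  · -- minimality
    intro q hq1 hq2 hqX hle
    constructor
    · intro j
      cases j with
      | zero => simp
      | succ k =>
        rw [phiC_prefix, sum_range_succ]
        have hX := (hqX k).1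
        have hA := hle.2 k
        have hB := hle.2 (k + 1)
        rw [sum_range_succ, sum_range_succ] at hB
        rw [phiC_snd]
        split_ifs with h
        · omega
        · have hfam := hle.1 (k + 1)
          rw [sum_range_succ, sum_range_succ] at hfam
          omega
    · intro j
      rw [phiC_key]
      exact hle.2 j
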